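/- arXiv:2001.00961 — 2 statements merged into one kernel-verified Lean document; each statement's English description precedes it below -/
import Mathlib

section
/- Let A be a Green biset functor, G a finite group, κ_G = ker(Res: A_G → A). If S is a simple A_G-module not annihilated by the ideal κ_G, and H is a minimal group for S, then S(H) is a simple quotient of κ̂_G(H) as Â_G(H)-modules, where κ̂_G(H) is the image of κ_G(H×H) in the essential algebra Â_G(H). -/
/-! A framework for Green biset functors.

Since the biset category is not available in Mathlib, we axiomatize it as a
structure `BisetCat k`: a `k`-linear category whose objects are (bundled) finite
groups, equipped with external products of morphisms and with the distinguished
morphisms coming from group homomorphisms (covariantly: induction, deflation,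
transport along isomorphisms; contravariantly: restriction and inflation),
subject to the standard relations.  A Green biset functor is then given by data
`GreenFunData` subject to the axioms `GreenFunData.IsGreen` (Bouc's axioms:
associativity, identity and functoriality of the bilinear products). -/

/-- A bundled finite group: an object of the biset category. -/
structure FGrp : Type 1 where
  carrier : Type
  [grp : Group carrier]
  [fin : Finite carrier]

attribute [instance] FGrp.grp FGrp.fin

/-- The product of two objects. -/
def FGrp.prod (G H : FGrp) : FGrp := ⟨G.carrier × H.carrier⟩

/-- The trivial group as an object. -/
def FGrp.unit : FGrp := ⟨PUnit⟩

/-- The order of (the group underlying) an object. -/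
noncomputable def FGrp.card (G : FGrp) : ℕ := Nat.card G.carrier

/-- The diagonal homomorphism `H → H × H`. -/
def FGrp.diag (G : FGrp) : G.carrier →* (G.prod G).carrier :=
  (MonoidHom.id G.carrier).prod (MonoidHom.id G.carrier)

/-- The unique homomorphism `H → 1`. -/
def FGrp.toUnit (G : FGrp) : G.carrier →* FGrp.unit.carrier := 1

/-- The canonical isomorphism `G × (H × L) ≅ (G × H) × L` as a homomorphism. -/
def FGrp.assocHom (G H L : FGrp) :
    (G.prod (H.prod L)).carrier →* ((G.prod H).prod L).carrier :=
  MonoidHom.mk' (fun p => ((p.1, p.2.1), p.2.2)) (by intro a b; rfl)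

/-- The canonical isomorphism `(G × H) × L ≅ G × (H × L)` as a homomorphism. -/
def FGrp.assocHom' (G H L : FGrp) :
    ((G.prod H).prod L).carrier →* (G.prod (H.prod L)).carrier :=
  MonoidHom.mk' (fun p => (p.1.1, (p.1.2, p.2))) (by intro a b; rfl)

/-- The canonical isomorphism `1 × H ≅ H` as a homomorphism. -/
def FGrp.lUnitHom (H : FGrp) : (FGrp.unit.prod H).carrier →* H.carrier :=
  MonoidHom.snd _ _

/-- The canonical isomorphism `H × 1 ≅ H` as a homomorphism. -/
def FGrp.rUnitHom (H : FGrp) : (H.prod FGrp.unit).carrier →* H.carrier :=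
  MonoidHom.fst _ _

/-- Its inverse `H ≅ H × 1`. -/
def FGrp.rUnitInv (H : FGrp) : H.carrier →* (H.prod FGrp.unit).carrier :=
  (MonoidHom.id H.carrier).prod 1

/-- The (k-linearized) biset category, axiomatized: hom-`k`-modules `Mor G H`
(playing the role of `k ⊗ B(H,G)`), bilinear composition, identities, external
products `prodMor` of morphisms, and the distinguished morphisms `toHom ψ`
(the biset `_{G^ψ}H_H`, covering restriction and inflation) and `fromHom ψ`
(the biset `_HH_{^ψG}`, covering induction, deflation and transport along
isomorphisms) attached to a group homomorphism `ψ : G → H`, with the standard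
relations among them. -/
structure BisetCat (k : Type) [CommRing k] : Type 1 where
  Mor : FGrp → FGrp → Type
  instAdd : ∀ G H, AddCommGroup (Mor G H)
  instMod : ∀ G H, Module k (Mor G H)
  comp : ∀ {G H L}, Mor H L → Mor G H → Mor G L
  one : ∀ G, Mor G G
  comp_assoc : ∀ {G H L M} (f : Mor L M) (g : Mor H L) (h : Mor G H),
    comp (comp f g) h = comp f (comp g h)
  comp_one : ∀ {G H} (f : Mor G H), comp f (one G) = f
  one_comp : ∀ {G H} (f : Mor G H), comp (one H) f = f
  comp_add : ∀ {G H L} (f f' : Mor H L) (g : Mor G H),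
    comp (f + f') g = comp f g + comp f' g
  add_comp : ∀ {G H L} (f : Mor H L) (g g' : Mor G H),
    comp f (g + g') = comp f g + comp f g'
  comp_smul : ∀ {G H L} (c : k) (f : Mor H L) (g : Mor G H),
    comp (c • f) g = c • comp f g
  smul_comp : ∀ {G H L} (c : k) (f : Mor H L) (g : Mor G H),
    comp f (c • g) = c • comp f g
  prodMor : ∀ {G G' H H'}, Mor G G' → Mor H H' → Mor (G.prod H) (G'.prod H')
  prodMor_one : ∀ G H, prodMor (one G) (one H) = one (G.prod H)
  prodMor_comp : ∀ {G G' G'' H H' H''} (f : Mor G' G'') (g : Mor G G')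
    (f' : Mor H' H'') (g' : Mor H H'),
    prodMor (comp f g) (comp f' g') = comp (prodMor f f') (prodMor g g')
  toHom : ∀ {G H : FGrp}, (G.carrier →* H.carrier) → Mor H G
  fromHom : ∀ {G H : FGrp}, (G.carrier →* H.carrier) → Mor G H
  toHom_id : ∀ G, toHom (MonoidHom.id G.carrier) = one G
  fromHom_id : ∀ G, fromHom (MonoidHom.id G.carrier) = one G
  toHom_comp : ∀ {G H L : FGrp} (ψ : G.carrier →* H.carrier) (φ : H.carrier →* L.carrier),
    toHom (φ.comp ψ) = comp (toHom ψ) (toHom φ)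
  fromHom_comp : ∀ {G H L : FGrp} (ψ : G.carrier →* H.carrier) (φ : H.carrier →* L.carrier),
    fromHom (φ.comp ψ) = comp (fromHom φ) (fromHom ψ)
  prodMor_toHom : ∀ {G G' H H' : FGrp} (ψ : G.carrier →* G'.carrier) (φ : H.carrier →* H'.carrier),
    prodMor (toHom ψ) (toHom φ) = toHom (ψ.prodMap φ)
  prodMor_fromHom : ∀ {G G' H H' : FGrp} (ψ : G.carrier →* G'.carrier) (φ : H.carrier →* H'.carrier),
    prodMor (fromHom ψ) (fromHom φ) = fromHom (ψ.prodMap φ)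

attribute [instance] BisetCat.instAdd BisetCat.instMod

variable {k : Type} [CommRing k]

namespace BisetCat

/-- The biset `→K` (i.e. `K` as a `(K×K,1)`-biset), as the morphism
`Ind^{K×K}_{ΔK} ∘ Inf^{ΔK}_1 : 1 ⟶ K × K`. -/
def arrowR (B : BisetCat k) (K : FGrp) : B.Mor FGrp.unit (K.prod K) :=
  B.comp (B.fromHom K.diag) (B.toHom K.toUnit)

/-- The biset `←K` (the opposite of `→K`), as the morphism
`Def ∘ Res : K × K ⟶ 1`. -/
def arrowL (B : BisetCat k) (K : FGrp) : B.Mor (K.prod K) FGrp.unit :=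
  B.comp (B.fromHom K.toUnit) (B.toHom K.diag)

end BisetCat

/-- The data of a Green biset functor over the biset category `B`: `k`-modules
`obj G = A(G)`, maps `A(f)` for morphisms `f` of `B`, bilinear products
`prod : A(G) × A(H) → A(G × H)` and a unit `eps ∈ A(1)`. -/
structure GreenFunData (k : Type) [CommRing k] (B : BisetCat k) : Type 1 where
  obj : FGrp → Type
  instAdd : ∀ G, AddCommGroup (obj G)
  instMod : ∀ G, Module k (obj G)
  map : ∀ {G H}, B.Mor G H → obj G → obj H
  prod : ∀ {G H}, obj G → obj H → obj (G.prod H)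
  eps : obj FGrp.unit

attribute [instance] GreenFunData.instAdd GreenFunData.instMod

namespace GreenFunData

variable {B : BisetCat k}

/-- Bouc's axioms for a Green biset functor: `map` makes `A` a `k`-linear functor
on `B`, the products are bilinear, associative and unital (via the canonical
isomorphisms) and functorial ("Frobenius/tensor" axiom). -/
structure IsGreen (A : GreenFunData k B) : Prop where
  map_add : ∀ {G H} (f : B.Mor G H) (a b : A.obj G), A.map f (a + b) = A.map f a + A.map f b
  map_smul : ∀ {G H} (f : B.Mor G H) (c : k) (a : A.obj G), A.map f (c • a) = c • A.map f a
  add_map : ∀ {G H} (f g : B.Mor G H) (a : A.obj G), A.map (f + g) a = A.map f a + A.map g a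
  smul_map : ∀ {G H} (c : k) (f : B.Mor G H) (a : A.obj G), A.map (c • f) a = c • A.map f a
  map_one : ∀ {G} (a : A.obj G), A.map (B.one G) a = a
  map_comp : ∀ {G H L} (g : B.Mor H L) (f : B.Mor G H) (a : A.obj G),
    A.map (B.comp g f) a = A.map g (A.map f a)
  prod_add_left : ∀ {G H} (a a' : A.obj G) (b : A.obj H),
    A.prod (a + a') b = A.prod a b + A.prod a' b
  prod_add_right : ∀ {G H} (a : A.obj G) (b b' : A.obj H),
    A.prod a (b + b') = A.prod a b + A.prod a b'
  prod_smul_left : ∀ {G H} (c : k) (a : A.obj G) (b : A.obj H),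
    A.prod (c • a) b = c • A.prod a b
  prod_smul_right : ∀ {G H} (c : k) (a : A.obj G) (b : A.obj H),
    A.prod a (c • b) = c • A.prod a b
  prod_assoc : ∀ {G H L} (a : A.obj G) (b : A.obj H) (c : A.obj L),
    A.prod (A.prod a b) c = A.map (B.fromHom (FGrp.assocHom G H L)) (A.prod a (A.prod b c))
  prod_lunit : ∀ {H} (a : A.obj H), A.map (B.fromHom (FGrp.lUnitHom H)) (A.prod A.eps a) = a
  prod_runit : ∀ {H} (a : A.obj H), A.map (B.fromHom (FGrp.rUnitHom H)) (A.prod a A.eps) = a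
  prod_map : ∀ {G G' H H'} (α : B.Mor G G') (β : B.Mor H H') (a : A.obj G) (b : A.obj H),
    A.map (B.prodMor α β) (A.prod a b) = A.prod (A.map α a) (A.map β b)

variable (A : GreenFunData k B)

/-- Hom-sets of the associated category `𝒫_A`: `𝒫_A(G,H) = A(H × G)`. -/
abbrev pHom (G H : FGrp) : Type := A.obj (H.prod G)

/-- The morphism `L × ←K × H : (L×K)×(K×H) ⟶ L×H` of `B` used to define
composition in the associated category. -/
def midMor (B : BisetCat k) (L K H : FGrp) :
    B.Mor ((L.prod K).prod (K.prod H)) (L.prod H) :=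
  B.comp (B.fromHom (MonoidHom.mk' (fun p : L.carrier × PUnit × H.carrier => (p.1, p.2.2))
      (by intro a b; rfl)))
    (B.comp (B.prodMor (B.one L) (B.prodMor (B.arrowL K) (B.one H)))
      (B.fromHom (MonoidHom.mk'
        (fun p : (L.carrier × K.carrier) × K.carrier × H.carrier =>
          (p.1.1, ((p.1.2, p.2.1), p.2.2))) (by intro a b; rfl))))

/-- Composition in the associated category `𝒫_A`: `β ∘ α = A(L × ←K × H)(β × α)`. -/
def pComp {H K L : FGrp} (β : A.pHom K L) (α : A.pHom H K) : A.pHom H L :=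
  A.map (midMor B L K H) (A.prod β α)

/-- Identities of the associated category `𝒫_A`: `Id_H = A(→H)(ε)`. -/
def pId (H : FGrp) : A.pHom H H := A.map (B.arrowR H) A.eps

/-- The ideal `I_A(H)` of `End_{𝒫_A}(H)`: the `k`-submodule generated by the
endomorphisms of `H` factoring through a group of order `< |H|`. -/
def essIdeal (H : FGrp) : Submodule k (A.pHom H H) :=
  Submodule.span k
    {f | ∃ (K : FGrp), K.card < H.card ∧ ∃ (g : A.pHom H K) (h : A.pHom K H), f = A.pComp h g}

end GreenFunData

/-! Morphisms of Green biset functors, the Yoneda–Dress (shifted) construction,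
and the inflation and restriction morphisms between `A` and `A_G`. -/

/-- A family `app : A(G) → C(G)` is a morphism of Green biset functors if it is
`k`-linear, natural with respect to bisets, multiplicative for the external
products, and unital. -/
structure IsGreenMor {k : Type} [CommRing k] {B : BisetCat k}
    (A C : GreenFunData k B) (app : ∀ G : FGrp, A.obj G → C.obj G) : Prop where
  app_add : ∀ (G : FGrp) (a b : A.obj G), app G (a + b) = app G a + app G b
  app_smul : ∀ (G : FGrp) (c : k) (a : A.obj G), app G (c • a) = c • app G a
  naturality : ∀ {G H : FGrp} (f : B.Mor G H) (a : A.obj G),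
    app H (A.map f a) = C.map f (app G a)
  app_prod : ∀ {G H : FGrp} (a : A.obj G) (b : A.obj H),
    app (G.prod H) (A.prod a b) = C.prod (app G a) (app H b)
  app_eps : app FGrp.unit A.eps = C.eps

namespace GreenFunData

variable {k : Type} [CommRing k] {B : BisetCat k}

/-- The twisted diagonal homomorphism `(K×H)×G → (K×G)×(H×G)` defining the
products of the shifted functor. -/
def shiftDiag (K H G₀ : FGrp) :
    ((K.prod H).prod G₀).carrier →* ((K.prod G₀).prod (H.prod G₀)).carrier :=
  MonoidHom.mk' (fun p => ((p.1.1, p.2), (p.1.2, p.2))) (by intro a b; rfl)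

/-- The Yoneda–Dress construction (shift) `A_{G₀}` of `A` at `G₀`:
`A_{G₀}(H) = A(H × G₀)`, `A_{G₀}(α) = A(α × Id_{G₀})`, with products
`a ×ᵈ b = A(twisted diagonal restriction)(a × b)` and unit `A(Inf^{1×G₀}_1)(ε)`. -/
def shift (A : GreenFunData k B) (G₀ : FGrp) : GreenFunData k B where
  obj H := A.obj (H.prod G₀)
  instAdd _ := A.instAdd _
  instMod _ := A.instMod _
  map {_ _} α := A.map (B.prodMor α (B.one G₀))
  prod {K H} a b := A.map (B.toHom (shiftDiag K H G₀)) (A.prod a b)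
  eps := A.map (B.toHom (FGrp.toUnit (FGrp.unit.prod G₀))) A.eps

/-- The inflation morphism `Inf : A → A_{G₀}`, with components
`A(Inf^{H×G₀}_H) : A(H) → A(H×G₀)` (inflation along the projection `H×G₀ → H`). -/
def infApp (A : GreenFunData k B) (G₀ : FGrp) :
    ∀ H : FGrp, A.obj H → (A.shift G₀).obj H :=
  fun H a => A.map (B.toHom (MonoidHom.fst H.carrier G₀.carrier)) a

/-- The restriction morphism `Res : A_{G₀} → A`, with components
`A(Res^{H×G₀}_H) : A(H×G₀) → A(H)` (restriction along `H ≅ H×1 ≤ H×G₀`). -/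
def resApp (A : GreenFunData k B) (G₀ : FGrp) :
    ∀ H : FGrp, (A.shift G₀).obj H → A.obj H :=
  fun H x => A.map (B.toHom ((MonoidHom.id H.carrier).prod (1 : H.carrier →* G₀.carrier))) x

/-- The left action of `A` on itself: for `α ∈ A(K×H)` and `a ∈ A(H)`,
`α · a = A(K × ←H)(α × a)`. -/
def lact (A : GreenFunData k B) {K H : FGrp} (α : A.obj (K.prod H)) (a : A.obj H) :
    A.obj K :=
  A.map (B.comp (B.fromHom (FGrp.rUnitHom K))
      (B.comp (B.prodMor (B.one K) (B.arrowL H)) (B.fromHom (FGrp.assocHom' K H H))))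
    (A.prod α a)

end GreenFunData

/-! Modules over a Green biset functor: `k`-linear functors on the associated
category `𝒫_A`. -/

namespace GreenFunData

variable {k : Type} [CommRing k] {B : BisetCat k}

/-- The data of a module over the Green biset functor `A`: `k`-modules `M(H)`
and an action map `M(α) : M(G) → M(H)` for every `α ∈ 𝒫_A(G,H) = A(H×G)`. -/
structure ModData (A : GreenFunData k B) : Type 1 where
  obj : FGrp → Type
  instAdd : ∀ G, AddCommGroup (obj G)
  instMod : ∀ G, Module k (obj G)
  act : ∀ {G H : FGrp}, A.pHom G H → obj G → obj H

attribute [instance] ModData.instAdd ModData.instMod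

/-- The axioms making `M` an `A`-module, i.e. a `k`-linear functor `𝒫_A → k`-Mod. -/
structure ModData.IsMod {A : GreenFunData k B} (M : ModData A) : Prop where
  act_add : ∀ {G H : FGrp} (α : A.pHom G H) (m m' : M.obj G),
    M.act α (m + m') = M.act α m + M.act α m'
  act_smul : ∀ {G H : FGrp} (α : A.pHom G H) (c : k) (m : M.obj G),
    M.act α (c • m) = c • M.act α m
  add_act : ∀ {G H : FGrp} (α α' : A.pHom G H) (m : M.obj G),
    M.act (α + α') m = M.act α m + M.act α' m
  smul_act : ∀ {G H : FGrp} (c : k) (α : A.pHom G H) (m : M.obj G),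
    M.act (c • α) m = c • M.act α m
  act_id : ∀ {H : FGrp} (m : M.obj H), M.act (A.pId H) m = m
  act_comp : ∀ {G H L : FGrp} (β : A.pHom H L) (α : A.pHom G H) (m : M.obj G),
    M.act (A.pComp β α) m = M.act β (M.act α m)

/-- The pullback of a `C`-module `M` along a morphism of Green biset functors
`f : A → C`: same evaluations, with `α` acting through `f(α)`. -/
def pullMod {A C : GreenFunData k B} (f : ∀ G : FGrp, A.obj G → C.obj G)
    (M : ModData C) : ModData A where
  obj := M.obj
  instAdd := M.instAdd
  instMod := M.instMod
  act {G H} α m := M.act (f (H.prod G) α) m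

/-- A morphism of `A`-modules: a `k`-linear natural family `φ_H : M(H) → N(H)`. -/
structure IsModMor {A : GreenFunData k B} (M N : ModData A)
    (φ : ∀ H : FGrp, M.obj H → N.obj H) : Prop where
  map_add : ∀ (H : FGrp) (m m' : M.obj H), φ H (m + m') = φ H m + φ H m'
  map_smul : ∀ (H : FGrp) (c : k) (m : M.obj H), φ H (c • m) = c • φ H m
  equivariant : ∀ {G H : FGrp} (α : A.pHom G H) (m : M.obj G),
    φ H (M.act α m) = N.act α (φ G m)

end GreenFunData

section AuxLemmas

open GreenFunData

variable {k : Type} [CommRing k] {B : BisetCat k}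

/-- Acting by a morphism on `0` gives `0`. -/
private lemma aux_act_zero_right {A' : GreenFunData k B} {M : ModData A'} (hM : M.IsMod)
    {G H' : FGrp} (α : A'.pHom G H') : M.act α (0 : M.obj G) = 0 := by
  have h := hM.act_add α 0 0
  rwa [add_zero, left_eq_add] at h

/-- Acting by `0` gives `0`. -/
private lemma aux_act_zero_left {A' : GreenFunData k B} {M : ModData A'} (hM : M.IsMod)
    {G H' : FGrp} (m : M.obj G) : M.act (0 : A'.pHom G H') m = 0 := by
  have h := hM.add_act (0 : A'.pHom G H') 0 m
  rwa [add_zero, left_eq_add] at h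

private lemma aux_map_zero (A : GreenFunData k B) (hA : A.IsGreen) {G H' : FGrp}
    (f : B.Mor G H') : A.map f (0 : A.obj G) = 0 := by
  have h := hA.map_add f 0 0
  rwa [add_zero, left_eq_add] at h

private lemma aux_prod_zero_left (A : GreenFunData k B) (hA : A.IsGreen) {G H' : FGrp}
    (b : A.obj H') : A.prod (0 : A.obj G) b = 0 := by
  have h := hA.prod_add_left (0 : A.obj G) 0 b
  rwa [add_zero, left_eq_add] at h

private lemma aux_prod_zero_right (A : GreenFunData k B) (hA : A.IsGreen) {G H' : FGrp}
    (a : A.obj G) : A.prod a (0 : A.obj H') = 0 := by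
  have h := hA.prod_add_right a (0 : A.obj H') 0
  rwa [add_zero, left_eq_add] at h

private lemma aux_res_add (A : GreenFunData k B) (hA : A.IsGreen) (G₀ : FGrp) (Z : FGrp)
    (x y : (A.shift G₀).obj Z) :
    A.resApp G₀ Z (x + y) = A.resApp G₀ Z x + A.resApp G₀ Z y :=
  hA.map_add _ x y

private lemma aux_res_smul (A : GreenFunData k B) (hA : A.IsGreen) (G₀ : FGrp) (Z : FGrp)
    (c : k) (x : (A.shift G₀).obj Z) :
    A.resApp G₀ Z (c • x) = c • A.resApp G₀ Z x :=
  hA.map_smul _ c x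

private lemma aux_res_zero (A : GreenFunData k B) (hA : A.IsGreen) (G₀ : FGrp) (Z : FGrp) :
    A.resApp G₀ Z (0 : (A.shift G₀).obj Z) = 0 :=
  aux_map_zero A hA _

/-- The key `B`-morphism identity: the restriction morphism composed with a
shifted morphism `f × G₀` precomposed with the twisted diagonal equals a
composite in which the two restrictions happen *first*, factor by factor.
This only uses the `toHom`-calculus and the interchange law for `prodMor`. -/
private lemma aux_mor_key (B : BisetCat k) (G₀ X₁ X₂ W : FGrp)
    (f : B.Mor (X₁.prod X₂) W) :
    B.comp (B.comp (B.toHom (G := W) (H := W.prod G₀) ((MonoidHom.id W.carrier).prod 1))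
        (B.prodMor f (B.one G₀))) (B.toHom (shiftDiag X₁ X₂ G₀)) =
    B.comp (B.comp (B.comp (B.toHom (FGrp.rUnitInv W)) (B.prodMor f (B.one FGrp.unit)))
        (B.toHom (FGrp.rUnitHom (X₁.prod X₂))))
      (B.prodMor (B.toHom (G := X₁) (H := X₁.prod G₀) ((MonoidHom.id X₁.carrier).prod 1))
        (B.toHom (G := X₂) (H := X₂.prod G₀) ((MonoidHom.id X₂.carrier).prod 1))) := by
  have e1 : B.toHom (G := W) (H := W.prod G₀) ((MonoidHom.id W.carrier).prod 1)
      = B.comp (B.toHom (FGrp.rUnitInv W))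
          (B.prodMor (B.one W) (B.toHom (G := FGrp.unit) (H := G₀) 1)) := by
    erw [← B.toHom_id W, B.prodMor_toHom, ← B.toHom_comp]
    congr 1
  have e2 : B.comp (B.prodMor (B.one W) (B.toHom (G := FGrp.unit) (H := G₀) 1))
      (B.prodMor f (B.one G₀)) = B.prodMor f (B.toHom (G := FGrp.unit) (H := G₀) 1) := by
    rw [← B.prodMor_comp, B.one_comp, B.comp_one]
  have e3 : B.comp (B.prodMor f (B.one FGrp.unit))
      (B.prodMor (B.one (X₁.prod X₂)) (B.toHom (G := FGrp.unit) (H := G₀) 1))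
      = B.prodMor f (B.toHom (G := FGrp.unit) (H := G₀) 1) := by
    rw [← B.prodMor_comp, B.comp_one, B.one_comp]
  have e4 : B.comp (B.prodMor (B.one (X₁.prod X₂)) (B.toHom (G := FGrp.unit) (H := G₀) 1))
      (B.toHom (shiftDiag X₁ X₂ G₀))
      = B.comp (B.toHom (FGrp.rUnitHom (X₁.prod X₂)))
          (B.prodMor
            (B.toHom (G := X₁) (H := X₁.prod G₀) ((MonoidHom.id X₁.carrier).prod 1))
            (B.toHom (G := X₂) (H := X₂.prod G₀) ((MonoidHom.id X₂.carrier).prod 1))) := by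
    erw [← B.toHom_id (X₁.prod X₂), B.prodMor_toHom, ← B.toHom_comp, B.prodMor_toHom,
      ← B.toHom_comp]
    congr 1
  simp only [B.comp_assoc]
  rw [e1, B.comp_assoc, ← B.comp_assoc (B.prodMor (B.one W) (B.toHom (G := FGrp.unit) (H := G₀) 1))
    (B.prodMor f (B.one G₀)) (B.toHom (shiftDiag X₁ X₂ G₀)), e2, ← e3, B.comp_assoc, e4]

/-- The fundamental computation: the restriction (to the unshifted functor) of a
composition in the category associated to the shifted functor factors through
the external product of the restrictions of the two factors. -/
private lemma aux_res_pComp (A : GreenFunData k B) (hA : A.IsGreen) (G₀ : FGrp)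
    {L K H : FGrp} (β : (A.shift G₀).pHom K L) (α : (A.shift G₀).pHom H K) :
    A.resApp G₀ (L.prod H) ((A.shift G₀).pComp β α) =
    A.map (B.toHom (FGrp.rUnitInv (L.prod H)))
      (A.map (B.prodMor (midMor B L K H) (B.one FGrp.unit))
        (A.map (B.toHom (FGrp.rUnitHom ((L.prod K).prod (K.prod H))))
          (A.prod (A.resApp G₀ (L.prod K) β) (A.resApp G₀ (K.prod H) α)))) := by
  calc
    A.resApp G₀ (L.prod H) ((A.shift G₀).pComp β α)
      = A.map (B.comp (B.comp
            (B.toHom (G := L.prod H) (H := (L.prod H).prod G₀)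
              ((MonoidHom.id (L.prod H).carrier).prod 1))
            (B.prodMor (midMor B L K H) (B.one G₀)))
          (B.toHom (shiftDiag (L.prod K) (K.prod H) G₀)))
          (A.prod (β : A.obj ((L.prod K).prod G₀)) (α : A.obj ((K.prod H).prod G₀))) := by
        rw [hA.map_comp, hA.map_comp]
        rfl
    _ = A.map (B.comp (B.comp (B.comp (B.toHom (FGrp.rUnitInv (L.prod H)))
            (B.prodMor (midMor B L K H) (B.one FGrp.unit)))
          (B.toHom (FGrp.rUnitHom ((L.prod K).prod (K.prod H)))))
          (B.prodMor
            (B.toHom (G := L.prod K) (H := (L.prod K).prod G₀)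
              ((MonoidHom.id (L.prod K).carrier).prod 1))
            (B.toHom (G := K.prod H) (H := (K.prod H).prod G₀)
              ((MonoidHom.id (K.prod H).carrier).prod 1))))
          (A.prod (β : A.obj ((L.prod K).prod G₀)) (α : A.obj ((K.prod H).prod G₀))) := by
        rw [aux_mor_key]
    _ = A.map (B.toHom (FGrp.rUnitInv (L.prod H)))
          (A.map (B.prodMor (midMor B L K H) (B.one FGrp.unit))
            (A.map (B.toHom (FGrp.rUnitHom ((L.prod K).prod (K.prod H))))
              (A.prod (A.resApp G₀ (L.prod K) β) (A.resApp G₀ (K.prod H) α)))) := by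
        erw [hA.map_comp, hA.map_comp, hA.map_comp, hA.prod_map]
        rfl

/-- `κ_{G₀}` is stable under left composition. -/
private lemma aux_res_pComp_zero_left (A : GreenFunData k B) (hA : A.IsGreen) (G₀ : FGrp)
    {L K H : FGrp} (β : (A.shift G₀).pHom K L) (α : (A.shift G₀).pHom H K)
    (h : A.resApp G₀ (L.prod K) β = 0) :
    A.resApp G₀ (L.prod H) ((A.shift G₀).pComp β α) = 0 := by
  rw [aux_res_pComp A hA G₀ β α, h, aux_prod_zero_left A hA, aux_map_zero A hA,
    aux_map_zero A hA, aux_map_zero A hA]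

/-- `κ_{G₀}` is stable under right composition. -/
private lemma aux_res_pComp_zero_right (A : GreenFunData k B) (hA : A.IsGreen) (G₀ : FGrp)
    {L K H : FGrp} (β : (A.shift G₀).pHom K L) (α : (A.shift G₀).pHom H K)
    (h : A.resApp G₀ (K.prod H) α = 0) :
    A.resApp G₀ (L.prod H) ((A.shift G₀).pComp β α) = 0 := by
  rw [aux_res_pComp A hA G₀ β α, h, aux_prod_zero_right A hA, aux_map_zero A hA,
    aux_map_zero A hA, aux_map_zero A hA]

end AuxLemmas

open GreenFunData in
/-- The set of elements of `S(K)` of the form `y · x` with `y` in the kernel of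
the restriction morphism. -/
private def kappaSet {k : Type} [CommRing k] {B : BisetCat k} (A : GreenFunData k B)
    (G₀ : FGrp) (S : ModData (A.shift G₀)) (K : FGrp) : Set (S.obj K) :=
  {v | ∃ (L : FGrp) (y : (A.shift G₀).pHom L K) (x : S.obj L),
    A.resApp G₀ (K.prod L) y = 0 ∧ v = S.act y x}

open GreenFunData in
/-- The orbit of an element `s ∈ S(H)` in `S(K)`. -/
private def orbSet {k : Type} [CommRing k] {B : BisetCat k} (A : GreenFunData k B)
    (G₀ : FGrp) (S : ModData (A.shift G₀)) {H : FGrp} (s : S.obj H) (K : FGrp) :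
    Set (S.obj K) :=
  {v | ∃ δ : (A.shift G₀).pHom H K, v = S.act δ s}

open GreenFunData in
/-- Let `κ_{G₀} = ker(Res : A_{G₀} → A)`.  If `S` is a simple `A_{G₀}`-module
not annihilated by the ideal `κ_{G₀}`, and `H` is a minimal group for `S`, then
`S(H)` is a simple quotient of `κ̂_{G₀}(H)` as `Â_{G₀}(H)`-modules: the ideal
of endomorphisms factoring through smaller groups annihilates `S(H)`, and there
is a generator `s` of `S(H)` such that `y ↦ y·s` maps `κ_{G₀}(H×H)` onto
`S(H)`. -/
theorem simple_not_annihilated_by_kernel {k : Type} [CommRing k] {B : BisetCat k}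
    (A : GreenFunData k B) (hA : A.IsGreen) (G₀ : FGrp)
    (S : ModData (A.shift G₀)) (hS : S.IsMod)
    -- `S` is simple:
    (hnz : ∃ (H : FGrp) (x : S.obj H), x ≠ 0)
    (hsimple : ∀ N : ∀ H : FGrp, Submodule k (S.obj H),
      (∀ (G H : FGrp) (α : (A.shift G₀).pHom G H) (x : S.obj G),
        x ∈ N G → S.act α x ∈ N H) →
      (∀ H : FGrp, N H = ⊥) ∨ (∀ H : FGrp, N H = ⊤))
    -- `S` is not annihilated by `κ_{G₀}`:
    (hκ : ∃ (G₁ H₁ : FGrp) (α : (A.shift G₀).pHom G₁ H₁) (x : S.obj G₁),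
      A.resApp G₀ (H₁.prod G₁) α = 0 ∧ S.act α x ≠ 0)
    -- `H` is a minimal group for `S`:
    (H : FGrp) (hHnz : ∃ x : S.obj H, x ≠ 0)
    (hHmin : ∀ K : FGrp, K.card < H.card → ∀ y : S.obj K, y = 0) :
    -- `S(H)` is an `Â_{G₀}(H)`-module ...
    (∀ f ∈ (A.shift G₀).essIdeal H, ∀ m : S.obj H, S.act f m = 0) ∧
    -- ... which is a quotient of `κ̂_{G₀}(H)`:
    ∃ s : S.obj H, ∀ m : S.obj H,
      ∃ y : (A.shift G₀).pHom H H, A.resApp G₀ (H.prod H) y = 0 ∧ S.act y s = m := by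
  constructor
  · -- Part 1: the essential ideal annihilates `S(H)`.
    intro f hf m
    replace hf : f ∈ Submodule.span k
        {f | ∃ (K : FGrp), K.card < H.card ∧
          ∃ (g : (A.shift G₀).pHom H K) (h : (A.shift G₀).pHom K H),
            f = (A.shift G₀).pComp h g} := hf
    induction hf using Submodule.span_induction with
    | mem v hv =>
      obtain ⟨K, hK, g, h', rfl⟩ := hv
      rw [hS.act_comp, hHmin K hK (S.act g m), aux_act_zero_right hS]
    | zero => exact aux_act_zero_left hS m
    | add a b ha hb pa pb => rw [hS.add_act, pa, pb, add_zero]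
    | smul c a ha pa => rw [hS.smul_act, pa, smul_zero]
  · -- Part 2.
    -- The subfunctor generated by the image of `κ_{G₀}` is all of `S`.
    have hNclosed : ∀ (G K : FGrp) (γ : (A.shift G₀).pHom G K) (x : S.obj G),
        x ∈ Submodule.span k (kappaSet A G₀ S G) →
        S.act γ x ∈ Submodule.span k (kappaSet A G₀ S K) := by
      intro G K γ x hx
      induction hx using Submodule.span_induction with
      | mem v hv =>
        obtain ⟨L, y, x', hy, rfl⟩ := hv
        rw [← hS.act_comp γ y x']
        exact Submodule.subset_span
          ⟨L, (A.shift G₀).pComp γ y, x', aux_res_pComp_zero_right A hA G₀ γ y hy, rfl⟩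
      | zero => rw [aux_act_zero_right hS γ]; exact Submodule.zero_mem _
      | add a b ha hb pa pb => rw [hS.act_add]; exact Submodule.add_mem _ pa pb
      | smul c a ha pa => rw [hS.act_smul]; exact Submodule.smul_mem _ c pa
    obtain ⟨G₁, H₁, α, x₁, hres, hact⟩ := hκ
    have hNtop : ∀ K, Submodule.span k (kappaSet A G₀ S K) = ⊤ := by
      rcases hsimple (fun K => Submodule.span k (kappaSet A G₀ S K)) hNclosed with hbot | htop
      · exfalso
        have hmem : S.act α x₁ ∈ Submodule.span k (kappaSet A G₀ S H₁) :=
          Submodule.subset_span ⟨G₁, α, x₁, hres, rfl⟩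
        rw [hbot H₁] at hmem
        exact hact ((Submodule.mem_bot k).mp hmem)
      · exact htop
    obtain ⟨s, hs⟩ := hHnz
    -- The subfunctor generated by `s` is all of `S`.
    have hMclosed : ∀ (G K : FGrp) (γ : (A.shift G₀).pHom G K) (x : S.obj G),
        x ∈ Submodule.span k (orbSet A G₀ S s G) →
        S.act γ x ∈ Submodule.span k (orbSet A G₀ S s K) := by
      intro G K γ x hx
      induction hx using Submodule.span_induction with
      | mem v hv =>
        obtain ⟨δ, rfl⟩ := hv
        rw [← hS.act_comp γ δ s]
        exact Submodule.subset_span ⟨(A.shift G₀).pComp γ δ, rfl⟩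
      | zero => rw [aux_act_zero_right hS γ]; exact Submodule.zero_mem _
      | add a b ha hb pa pb => rw [hS.act_add]; exact Submodule.add_mem _ pa pb
      | smul c a ha pa => rw [hS.act_smul]; exact Submodule.smul_mem _ c pa
    have hMtop : ∀ K, Submodule.span k (orbSet A G₀ S s K) = ⊤ := by
      rcases hsimple (fun K => Submodule.span k (orbSet A G₀ S s K)) hMclosed with hbot | htop
      · exfalso
        have hmem : s ∈ Submodule.span k (orbSet A G₀ S s H) :=
          Submodule.subset_span ⟨(A.shift G₀).pId H, (hS.act_id s).symm⟩
        rw [hbot H] at hmem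
        exact hs ((Submodule.mem_bot k).mp hmem)
      · exact htop
    -- Every element of every `S(K)` is obtained from `s` by a single morphism.
    have gen : ∀ (K : FGrp) (x : S.obj K), ∃ δ : (A.shift G₀).pHom H K, S.act δ s = x := by
      intro K x
      have hx : x ∈ Submodule.span k (orbSet A G₀ S s K) := by
        rw [hMtop K]; exact Submodule.mem_top
      induction hx using Submodule.span_induction with
      | mem v hv => obtain ⟨δ, rfl⟩ := hv; exact ⟨δ, rfl⟩
      | zero => exact ⟨0, aux_act_zero_left hS s⟩
      | add a b ha hb pa pb =>
        obtain ⟨d1, e1⟩ := pa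
        obtain ⟨d2, e2⟩ := pb
        exact ⟨d1 + d2, by rw [hS.add_act, e1, e2]⟩
      | smul c a ha pa =>
        obtain ⟨d, e⟩ := pa
        exact ⟨c • d, by rw [hS.smul_act, e]⟩
    refine ⟨s, fun m => ?_⟩
    have hm : m ∈ Submodule.span k (kappaSet A G₀ S H) := by
      rw [hNtop H]; exact Submodule.mem_top
    induction hm using Submodule.span_induction with
    | mem v hv =>
      obtain ⟨L, y, x', hy, rfl⟩ := hv
      obtain ⟨δ, hδ⟩ := gen L x'
      exact ⟨(A.shift G₀).pComp y δ, aux_res_pComp_zero_left A hA G₀ y δ hy,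
        by rw [hS.act_comp, hδ]⟩
    | zero => exact ⟨0, aux_res_zero A hA G₀ (H.prod H), aux_act_zero_left hS s⟩
    | add a b ha hb pa pb =>
      obtain ⟨y1, r1, e1⟩ := pa
      obtain ⟨y2, r2, e2⟩ := pb
      exact ⟨y1 + y2, by rw [aux_res_add A hA G₀, r1, r2, add_zero],
        by rw [hS.add_act, e1, e2]⟩
    | smul c a ha pa =>
      obtain ⟨y1, r1, e1⟩ := pa
      exact ⟨c • y1, by rw [aux_res_smul A hA G₀, r1, smul_zero],
        by rw [hS.smul_act, e1]⟩
end

section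
/- Let H be a nontrivial finite cyclic group, k a commutative ring, and F a field of characteristic zero containing a primitive |H|-th root of unity. Then every element of the representation ring k⊗R_F(H×H), viewed as an endomorphism of H in the associated category of the Green biset functor kR_F, factors through a group of order strictly smaller than |H|; that is, the essential algebra of kR_F at H vanishes. -/
variable {k : Type} [CommRing k]

/-- A finite-dimensional `F`-linear representation of a group `G`, bundled. -/
structure FDRepW (F : Type) [Field F] (G : Type) [Group G] : Type 1 where
  V : Type
  [instAdd : AddCommGroup V]
  [instMod : Module F V]
  [instFin : FiniteDimensional F V]
  ρ : Representation F G V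

attribute [instance] FDRepW.instAdd FDRepW.instMod FDRepW.instFin

variable {F : Type} [Field F]

/-- Irreducibility of a representation: it is nonzero and has no nontrivial
proper invariant subspace. -/
def FDRepW.Irreducible {G : Type} [Group G] (W : FDRepW F G) : Prop :=
  Nontrivial W.V ∧
    ∀ p : Submodule F W.V, (∀ (g : G) (v : W.V), v ∈ p → W.ρ g v ∈ p) → p = ⊥ ∨ p = ⊤

/-- Restriction of a representation along a group homomorphism. -/
def FDRepW.res {G G' : Type} [Group G] [Group G'] (W : FDRepW F G) (ψ : G' →* G) :
    FDRepW F G' :=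
  { V := W.V, ρ := W.ρ.comp ψ }

/-- The external tensor product of representations of `G` and `G'`, a
representation of `G × G'`. -/
noncomputable def FDRepW.ext {G G' : Type} [Group G] [Group G']
    (W : FDRepW F G) (W' : FDRepW F G') : FDRepW F (G × G') :=
  { V := TensorProduct F W.V W'.V,
    ρ := Representation.tprod (W.ρ.comp (MonoidHom.fst G G')) (W'.ρ.comp (MonoidHom.snd G G')) }


/-! ### Auxiliary material for the proof -/

section EssAux

instance : Subsingleton FGrp.unit.carrier := inferInstanceAs (Subsingleton PUnit)
instance : Nonempty FGrp.unit.carrier := inferInstanceAs (Nonempty PUnit)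

/-- The inverse of the left unitor, as a group homomorphism. -/
def lInvHom (G : FGrp) : G.carrier →* (FGrp.unit.prod G).carrier :=
  (1 : G.carrier →* FGrp.unit.carrier).prod (MonoidHom.id G.carrier)

lemma lUnit_comp_lInv (G : FGrp) :
    (FGrp.lUnitHom G).comp (lInvHom G) = MonoidHom.id G.carrier :=
  MonoidHom.ext fun _ => rfl

lemma lInv_comp_lUnit (G : FGrp) :
    (lInvHom G).comp (FGrp.lUnitHom G) = MonoidHom.id (FGrp.unit.prod G).carrier :=
  MonoidHom.ext fun p => Prod.ext (Subsingleton.elim _ _) rfl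

variable {B : BisetCat k} (A : GreenFunData k B)

lemma green_map_cancel (hA : A.IsGreen) {G G' : FGrp}
    (ψ : G.carrier →* G'.carrier) (φ : G'.carrier →* G.carrier)
    (h : φ.comp ψ = MonoidHom.id G.carrier) (x : A.obj G) :
    A.map (B.fromHom φ) (A.map (B.fromHom ψ) x) = x := by
  rw [← hA.map_comp, ← B.fromHom_comp, h, B.fromHom_id, hA.map_one]

lemma green_fromHom_lInv (hA : A.IsGreen) (G : FGrp) (x : A.obj G) :
    A.map (B.fromHom (lInvHom G)) x = A.prod A.eps x := by
  conv_lhs => rw [← hA.prod_lunit x]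
  rw [green_map_cancel A hA (FGrp.lUnitHom G) (lInvHom G) (lInv_comp_lUnit G)]

lemma green_map_zero (hA : A.IsGreen) {G G' : FGrp} (f : B.Mor G G') :
    A.map f (0 : A.obj G) = 0 := by
  have h := hA.map_smul f (0 : k) (0 : A.obj G)
  rwa [zero_smul, zero_smul] at h

lemma green_prod_zero_left (hA : A.IsGreen) {G G' : FGrp} (b : A.obj G') :
    A.prod (0 : A.obj G) b = 0 := by
  have h := hA.prod_smul_left (0 : k) (0 : A.obj G) b
  rwa [zero_smul, zero_smul] at h

lemma green_prod_zero_right (hA : A.IsGreen) {G G' : FGrp} (a : A.obj G) :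
    A.prod a (0 : A.obj G') = 0 := by
  have h := hA.prod_smul_right (0 : k) a (0 : A.obj G')
  rwa [zero_smul, zero_smul] at h

lemma arrowL_unit : B.arrowL FGrp.unit = B.toHom FGrp.unit.diag := by
  unfold BisetCat.arrowL
  rw [show FGrp.unit.toUnit = MonoidHom.id FGrp.unit.carrier from
    MonoidHom.ext fun _ => Subsingleton.elim _ _, B.fromHom_id, B.one_comp]

/-- The morphism `D : 1 ⟶ 1` appearing in the composition formula. -/
def DDmor (B : BisetCat k) : B.Mor FGrp.unit FGrp.unit :=
  B.comp (B.arrowL FGrp.unit) (B.fromHom (lInvHom FGrp.unit))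

/-- A right inverse for `DDmor`. -/
def DDinvMor (B : BisetCat k) : B.Mor FGrp.unit FGrp.unit :=
  B.comp (B.fromHom (FGrp.lUnitHom FGrp.unit)) (B.toHom (FGrp.lUnitHom FGrp.unit))

lemma DD_comp_DDinv (B : BisetCat k) : B.comp (DDmor B) (DDinvMor B) = B.one FGrp.unit := by
  unfold DDmor DDinvMor
  rw [arrowL_unit, B.comp_assoc,
    ← B.comp_assoc (B.fromHom (lInvHom FGrp.unit)) (B.fromHom (FGrp.lUnitHom FGrp.unit))
      (B.toHom (FGrp.lUnitHom FGrp.unit)),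
    ← B.fromHom_comp, lInv_comp_lUnit, B.fromHom_id, B.one_comp, ← B.toHom_comp,
    show (FGrp.lUnitHom FGrp.unit).comp FGrp.unit.diag = MonoidHom.id FGrp.unit.carrier from
      MonoidHom.ext fun _ => rfl, B.toHom_id]

/-- The key computation: composition in `𝒫_A` through the trivial group. -/
lemma pComp_formula (hA : A.IsGreen) (H : FGrp) (a : A.obj H) (g : A.obj (FGrp.unit.prod H)) :
    A.pComp (A.prod a A.eps) g
      = A.prod a (A.map (B.fromHom (FGrp.lUnitHom H))
          (A.map (B.prodMor (DDmor B) (B.one H)) g)) := by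
  show A.map (GreenFunData.midMor B H FGrp.unit H) (A.prod (A.prod a A.eps) g) = _
  unfold GreenFunData.midMor
  rw [hA.map_comp, hA.map_comp]
  -- step 3 : the associativity relabelling
  rw [show (MonoidHom.mk'
      (fun p : (H.carrier × FGrp.unit.carrier) × FGrp.unit.carrier × H.carrier =>
        (p.1.1, ((p.1.2, p.2.1), p.2.2))) (by intro a b; rfl) :
      ((H.prod FGrp.unit).prod (FGrp.unit.prod H)).carrier →*
        (H.prod ((FGrp.unit.prod FGrp.unit).prod H)).carrier)
    = ((MonoidHom.id H.carrier).prodMap (FGrp.assocHom FGrp.unit FGrp.unit H)).comp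
        (FGrp.assocHom' H FGrp.unit (FGrp.unit.prod H)) from MonoidHom.ext fun _ => rfl]
  erw [B.fromHom_comp (G := (H.prod FGrp.unit).prod (FGrp.unit.prod H))
      (H := H.prod (FGrp.unit.prod (FGrp.unit.prod H)))
      (L := H.prod ((FGrp.unit.prod FGrp.unit).prod H)),
    hA.map_comp, hA.prod_assoc a A.eps g,
    green_map_cancel A hA (FGrp.assocHom H FGrp.unit (FGrp.unit.prod H))
      (FGrp.assocHom' H FGrp.unit (FGrp.unit.prod H)) (MonoidHom.ext fun _ => rfl)]
  rw [← B.prodMor_fromHom, B.fromHom_id, hA.prod_map, hA.map_one]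
  rw [← green_fromHom_lInv A hA (FGrp.unit.prod H) g,
    ← hA.map_comp (B.fromHom (FGrp.assocHom FGrp.unit FGrp.unit H))
      (B.fromHom (lInvHom (FGrp.unit.prod H))) g,
    ← B.fromHom_comp,
    show (FGrp.assocHom FGrp.unit FGrp.unit H).comp (lInvHom (FGrp.unit.prod H))
      = (lInvHom FGrp.unit).prodMap (MonoidHom.id H.carrier) from MonoidHom.ext fun _ => rfl,
    ← B.prodMor_fromHom, B.fromHom_id]
  -- step 2 : contract the middle through the trivial group
  rw [hA.prod_map, hA.map_one, ← hA.map_comp, ← B.prodMor_comp, B.comp_one]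
  -- step 1 : the left unitor
  rw [show (MonoidHom.mk' (fun p : H.carrier × PUnit × H.carrier => (p.1, p.2.2))
      (by intro a b; rfl) :
      (H.prod (FGrp.unit.prod H)).carrier →* (H.prod H).carrier)
    = (MonoidHom.id H.carrier).prodMap (FGrp.lUnitHom H) from MonoidHom.ext fun _ => rfl,
    ← B.prodMor_fromHom, B.fromHom_id, hA.prod_map, hA.map_one]
  rfl

lemma prod_mem_essIdeal (hA : A.IsGreen) (H : FGrp) (hlt : FGrp.unit.card < H.card)
    (a b : A.obj H) : A.prod a b ∈ A.essIdeal H := by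
  have hDg : A.map (B.prodMor (DDmor B) (B.one H))
      (A.map (B.prodMor (DDinvMor B) (B.one H)) (A.prod A.eps b)) = A.prod A.eps b := by
    rw [← hA.map_comp, ← B.prodMor_comp, DD_comp_DDinv, B.comp_one, B.prodMor_one, hA.map_one]
  have hform := pComp_formula A hA H a
    (A.map (B.prodMor (DDinvMor B) (B.one H)) (A.prod A.eps b))
  rw [hDg, hA.prod_lunit] at hform
  exact Submodule.subset_span
    ⟨FGrp.unit, hlt, A.map (B.prodMor (DDinvMor B) (B.one H)) (A.prod A.eps b),
      A.prod a A.eps, hform.symm⟩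

end EssAux

section RepAux

/-- A scalar representation attached to a multiplicative scalar-valued function. -/
def sRep {V : Type} [AddCommGroup V] [Module F V] {G : Type} [Group G]
    (φ : G → F) (h1 : φ 1 = 1) (hm : ∀ a b : G, φ (a * b) = φ a * φ b) :
    Representation F G V :=
  { toFun := fun g => φ g • (1 : Module.End F V)
    map_one' := by
      show φ 1 • (1 : Module.End F V) = 1
      rw [h1, one_smul]
    map_mul' := fun a b => by
      show φ (a * b) • (1 : Module.End F V) = (φ a • 1) * (φ b • 1)
      rw [hm, smul_mul_smul_comm, one_mul] }

lemma sRep_apply {V : Type} [AddCommGroup V] [Module F V] {G : Type} [Group G]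
    (φ : G → F) (h1 : φ 1 = 1) (hm : ∀ a b : G, φ (a * b) = φ a * φ b) (g : G) :
    sRep (V := V) φ h1 hm g = φ g • (1 : Module.End F V) := rfl

lemma scalar_smul_cancel {V : Type} [AddCommGroup V] [Module F V] [Nontrivial V]
    {c d : F} (h : c • (1 : Module.End F V) = d • (1 : Module.End F V)) : c = d := by
  obtain ⟨v, hv⟩ := exists_ne (0 : V)
  have h2 := DFunLike.congr_fun h v
  simp only [LinearMap.smul_apply, Module.End.one_apply] at h2
  have h3 : (c - d) • v = 0 := by rw [sub_smul, h2, sub_self]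
  rcases smul_eq_zero.mp h3 with h4 | h4
  · exact sub_eq_zero.mp h4
  · exact absurd h4 hv

lemma fdrep_res_res {G₁ G₂ G₃ : Type} [Group G₁] [Group G₂] [Group G₃]
    (W : FDRepW F G₃) (ψ : G₂ →* G₃) (φ : G₁ →* G₂) :
    (W.res ψ).res φ = W.res (ψ.comp φ) := rfl

lemma fdrep_res_id {G : Type} [Group G] (W : FDRepW F G) :
    W.res (MonoidHom.id G) = W := by
  cases W
  simp only [FDRepW.res, MonoidHom.comp_id]

lemma fdrep_mk_congr {G : Type} [Group G] {V : Type} [AddCommGroup V] [Module F V]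
    [FiniteDimensional F V] {ρ σ : Representation F G V} (h : ρ = σ) :
    (FDRepW.mk V ρ : FDRepW F G) = FDRepW.mk V σ := by rw [h]

/-- Every irreducible representation of a finite commutative group of exponent dividing `n`
acts by scalars, provided `F` has a primitive `n`-th root of unity. -/
lemma irred_ρ_scalar {G : Type} [Group G] (hcomm : ∀ x y : G, x * y = y * x)
    {n : ℕ} (hn : n ≠ 0) (hpow : ∀ g : G, g ^ n = 1) {ζ : F} (hζ : IsPrimitiveRoot ζ n)
    (W : FDRepW F G) (hW : W.Irreducible) (g : G) :
    ∃ c : F, W.ρ g = c • (1 : Module.End F W.V) := by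
  obtain ⟨hnt, hsub⟩ := hW
  haveI := hnt
  haveI : Nontrivial (Module.End F W.V) := by
    refine ⟨1, 0, fun h => ?_⟩
    obtain ⟨v, hv⟩ := exists_ne (0 : W.V)
    exact hv (by simpa using DFunLike.congr_fun h v)
  have hρ : ∀ x y : G, W.ρ (x * y) = W.ρ x * W.ρ y := fun x y =>
    map_mul (show G →* Module.End F W.V from W.ρ) x y
  set f : Module.End F W.V := W.ρ g with hfdef
  have hfn : f ^ n = 1 := by
    rw [hfdef, ← map_pow (show G →* Module.End F W.V from W.ρ), hpow,
      map_one (show G →* Module.End F W.V from W.ρ)]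
  have hint : IsIntegral F f := IsIntegral.of_finite F f
  have haev : (Polynomial.aeval f) ((Polynomial.X : Polynomial F) ^ n - 1) = 0 := by
    rw [map_sub, map_pow, Polynomial.aeval_X, map_one, hfn, sub_self]
  have hdvd : minpoly F f ∣ (Polynomial.X : Polynomial F) ^ n - 1 := minpoly.dvd F f haev
  have hCne : (Polynomial.X ^ n - 1 : Polynomial F) ≠ 0 := by
    have hm := Polynomial.monic_X_pow_sub_C (1 : F) hn
    rw [Polynomial.C_1] at hm
    exact hm.ne_zero
  have hsp : (Polynomial.X ^ n - 1 : Polynomial F).Splits := by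
    have h := Polynomial.X_pow_sub_one_splits hζ
    rwa [Polynomial.C_1] at h
  have hs2 := Polynomial.Splits.of_dvd hsp hCne hdvd
  have hdeg : (minpoly F f).degree ≠ 0 := (minpoly.degree_pos hint).ne'
  obtain ⟨μ, hμ⟩ := Polynomial.Splits.exists_eval_eq_zero hs2 hdeg
  have hev : f.HasEigenvalue μ := Module.End.hasEigenvalue_iff_isRoot.mpr hμ
  obtain ⟨v, hv⟩ := hev.exists_hasEigenvector
  have hinv : ∀ (h : G) (w : W.V), w ∈ Module.End.eigenspace f μ →
      W.ρ h w ∈ Module.End.eigenspace f μ := by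
    intro h w hw
    rw [Module.End.mem_eigenspace_iff] at hw ⊢
    have hc : f * W.ρ h = W.ρ h * f := by rw [hfdef, ← hρ, ← hρ, hcomm]
    calc f (W.ρ h w) = (f * W.ρ h) w := rfl
      _ = (W.ρ h * f) w := by rw [hc]
      _ = W.ρ h (f w) := rfl
      _ = W.ρ h (μ • w) := by rw [hw]
      _ = μ • W.ρ h w := map_smul _ _ _
  rcases hsub (Module.End.eigenspace f μ) hinv with hbot | htop
  · exact absurd ((Submodule.mem_bot F).mp (hbot ▸ hv.1)) hv.2
  · refine ⟨μ, ?_⟩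
    apply LinearMap.ext
    intro w
    have hw : w ∈ Module.End.eigenspace f μ := htop ▸ Submodule.mem_top
    rw [Module.End.mem_eigenspace_iff] at hw
    simpa using hw

/-- The key representation identity: restricting an external product with a representation of
the trivial group along the left unitor yields an honest external product, when the second
factor acts by scalars. -/
lemma ext_res_scalar (H : FGrp) (E : FDRepW F FGrp.unit.carrier)
    (W : FDRepW F (H.prod H).carrier) (χ : (H.prod H).carrier → F)
    (hχ : ∀ g, W.ρ g = χ g • (1 : Module.End F W.V))
    (hm : ∀ u w, χ (u * w) = χ u * χ w)
    (ρX : Representation F H.carrier E.V)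
    (hρX : ∀ a3, ρX a3 = χ (a3, 1) • (1 : Module.End F E.V))
    (ρY : Representation F H.carrier W.V)
    (hρY : ∀ b3, ρY b3 = χ (1, b3) • (1 : Module.End F W.V)) :
    (E.ext W).res (lInvHom (H.prod H))
      = FDRepW.ext (FDRepW.mk E.V ρX) (FDRepW.mk W.V ρY) := by
  have hρeq : ((E.ext W).ρ).comp (lInvHom (H.prod H))
      = (FDRepW.ext (FDRepW.mk E.V ρX) (FDRepW.mk W.V ρY)).ρ := by
    apply MonoidHom.ext
    intro g
    show TensorProduct.map (E.ρ 1) (W.ρ g) = TensorProduct.map (ρX g.1) (ρY g.2)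
    rw [map_one (show FGrp.unit.carrier →* Module.End F E.V from E.ρ), hχ g, hρX, hρY,
      TensorProduct.map_smul_right, TensorProduct.map_smul_left,
      TensorProduct.map_smul_right, smul_smul, ← hm (g.1, 1) (1, g.2)]
    erw [show ((g.1, 1) * (1, g.2) : (H.prod H).carrier) = g from by
        exact Prod.ext (mul_one _) (one_mul _)]
  exact fdrep_mk_congr hρeq

end RepAux


/-- Let `kR_F` be the Green biset functor of `F`-linear representations (char
`F = 0`), described by classes `cls(ρ) ∈ A(U)` of finite-dimensional
representations, spanning each `A(U)`, compatible with restriction/inflation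
along group homomorphisms and with external products.  If `H` is a nontrivial
finite cyclic group and `F` contains a primitive `|H|`-th root of unity, then
every element of `A(H×H) = End_{𝒫_A}(H)` factors through a group of order
`< |H|`, i.e. the essential algebra of `kR_F` at `H` vanishes. -/
theorem repFunctor_essAlgebra_vanishes {k : Type} [CommRing k] [CharZero F]
    {B : BisetCat k} (A : GreenFunData k B) (hA : A.IsGreen)
    (cls : ∀ U : FGrp, FDRepW F U.carrier → A.obj U)
    (hspan : ∀ U : FGrp,
      Submodule.span k {x : A.obj U | ∃ W : FDRepW F U.carrier, W.Irreducible ∧ x = cls U W}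
        = ⊤)
    (hres : ∀ (U U' : FGrp) (ψ : U.carrier →* U'.carrier) (W : FDRepW F U'.carrier),
      A.map (B.toHom ψ) (cls U' W) = cls U (W.res ψ))
    (hext : ∀ (U U' : FGrp) (W : FDRepW F U.carrier) (W' : FDRepW F U'.carrier),
      A.prod (cls U W) (cls U' W') = cls (U.prod U') (FDRepW.ext W W'))
    (H : FGrp) (hcyc : IsCyclic H.carrier) (hnt : Nontrivial H.carrier)
    (ζ : F) (hζ : IsPrimitiveRoot ζ (Nat.card H.carrier)) :
    A.essIdeal H = ⊤ := by
  classical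
  have hcommH : ∀ x y : H.carrier, x * y = y * x := by
    obtain ⟨σ, hσ⟩ := hcyc.exists_generator
    intro x y
    obtain ⟨i, hi⟩ := Subgroup.mem_zpowers_iff.mp (hσ x)
    obtain ⟨j, hj⟩ := Subgroup.mem_zpowers_iff.mp (hσ y)
    rw [← hi, ← hj, ← zpow_add, ← zpow_add, add_comm]
  have hcommHH : ∀ x y : (H.prod H).carrier, x * y = y * x := fun x y =>
    Prod.ext (hcommH _ _) (hcommH _ _)
  haveI := hnt
  have hn0 : Nat.card H.carrier ≠ 0 := Nat.card_pos.ne'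
  have hpowHH : ∀ g : (H.prod H).carrier, g ^ Nat.card H.carrier = 1 := by
    intro g
    refine Prod.ext ?_ ?_
    · calc (g ^ Nat.card H.carrier).1 = g.1 ^ Nat.card H.carrier :=
          map_pow (MonoidHom.fst H.carrier H.carrier) g (Nat.card H.carrier)
        _ = 1 := pow_card_eq_one'
    · calc (g ^ Nat.card H.carrier).2 = g.2 ^ Nat.card H.carrier :=
          map_pow (MonoidHom.snd H.carrier H.carrier) g (Nat.card H.carrier)
        _ = 1 := pow_card_eq_one'
  have hlt : FGrp.unit.card < H.card := by
    show Nat.card FGrp.unit.carrier < Nat.card H.carrier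
    rw [show Nat.card FGrp.unit.carrier = 1 from Nat.card_unique]
    exact Finite.one_lt_card
  rw [eq_top_iff, ← hspan (H.prod H)]
  refine Submodule.span_le.mpr ?_
  rintro x ⟨Ω, hΩ, rfl⟩
  rw [SetLike.mem_coe]
  have hresid : (Ω.res (FGrp.lUnitHom (H.prod H))).res (lInvHom (H.prod H)) = Ω := by
    rw [fdrep_res_res,
      show (FGrp.lUnitHom (H.prod H)).comp (lInvHom (H.prod H))
        = MonoidHom.id (H.prod H).carrier from MonoidHom.ext fun _ => rfl,
      fdrep_res_id]
  have hkey : cls (H.prod H) Ω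
      = A.map (B.toHom (lInvHom (H.prod H)))
          (A.prod A.eps
            (A.map (B.fromHom (FGrp.lUnitHom (H.prod H)))
              (cls (FGrp.unit.prod (H.prod H)) (Ω.res (FGrp.lUnitHom (H.prod H)))))) := by
    rw [← green_fromHom_lInv A hA (H.prod H),
      green_map_cancel A hA (FGrp.lUnitHom (H.prod H)) (lInvHom (H.prod H))
        (lInv_comp_lUnit (H.prod H)), hres, hresid]
  rw [hkey]
  have main : ∀ z ∈ Submodule.span k
      {x : A.obj (H.prod H) |
        ∃ W : FDRepW F (H.prod H).carrier, W.Irreducible ∧ x = cls (H.prod H) W},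
      ∀ e ∈ Submodule.span k
      {x : A.obj FGrp.unit |
        ∃ W : FDRepW F FGrp.unit.carrier, W.Irreducible ∧ x = cls FGrp.unit W},
      A.map (B.toHom (lInvHom (H.prod H))) (A.prod e z) ∈ A.essIdeal H := by
    intro z hz
    refine Submodule.span_induction
      (p := fun z _ => ∀ e ∈ Submodule.span k
        {x : A.obj FGrp.unit |
          ∃ W : FDRepW F FGrp.unit.carrier, W.Irreducible ∧ x = cls FGrp.unit W},
        A.map (B.toHom (lInvHom (H.prod H))) (A.prod e z) ∈ A.essIdeal H)
      ?_ ?_ ?_ ?_ hz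
    · rintro z' ⟨W, hW, rfl⟩ e he
      refine Submodule.span_induction
        (p := fun e _ =>
          A.map (B.toHom (lInvHom (H.prod H))) (A.prod e (cls (H.prod H) W)) ∈ A.essIdeal H)
        ?_ ?_ ?_ ?_ he
      · rintro e' ⟨E, hE, rfl⟩
        have hsc : ∀ gg : (H.prod H).carrier,
            ∃ c : F, W.ρ gg = c • (1 : Module.End F W.V) :=
          fun gg => irred_ρ_scalar hcommHH hn0 hpowHH hζ W hW gg
        choose χ hχ using hsc
        haveI hntV : Nontrivial W.V := hW.1
        have hm : ∀ u w : (H.prod H).carrier, χ (u * w) = χ u * χ w := by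
          intro u w
          have h := map_mul (show (H.prod H).carrier →* Module.End F W.V from W.ρ) u w
          rw [hχ, hχ, hχ, smul_mul_smul_comm, one_mul] at h
          exact scalar_smul_cancel h
        have h1 : χ 1 = 1 := by
          have h := map_one (show (H.prod H).carrier →* Module.End F W.V from W.ρ)
          rw [hχ] at h
          exact scalar_smul_cancel (h.trans (one_smul F (1 : Module.End F W.V)).symm)
        have hmX : ∀ a b : H.carrier, χ (a * b, (1 : H.carrier)) = χ (a, 1) * χ (b, 1) := by
          intro a b
          erw [← hm]
          congr 1
          exact Prod.ext rfl (one_mul _).symm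
        have hmY : ∀ a b : H.carrier, χ ((1 : H.carrier), a * b) = χ (1, a) * χ (1, b) := by
          intro a b
          erw [← hm]
          congr 1
          exact Prod.ext (one_mul _).symm rfl
        have hXY := ext_res_scalar H E W χ hχ hm
          (sRep (V := E.V) (fun a : H.carrier => χ (a, 1)) h1 hmX) (fun _ => rfl)
          (sRep (V := W.V) (fun b : H.carrier => χ (1, b)) h1 hmY) (fun _ => rfl)
        rw [hext]
        erw [hres]
        erw [hXY, ← hext]
        exact prod_mem_essIdeal A hA H hlt _ _
      · rw [green_prod_zero_left A hA, green_map_zero A hA]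
        exact Submodule.zero_mem _
      · intro u v _ _ hpu hpv
        rw [hA.prod_add_left, hA.map_add]
        exact Submodule.add_mem _ hpu hpv
      · intro c u _ hpu
        rw [hA.prod_smul_left, hA.map_smul]
        exact Submodule.smul_mem _ c hpu
    · intro e _
      rw [green_prod_zero_right A hA, green_map_zero A hA]
      exact Submodule.zero_mem _
    · intro u v _ _ hpu hpv e he
      rw [hA.prod_add_right, hA.map_add]
      exact Submodule.add_mem _ (hpu e he) (hpv e he)
    · intro c u _ hpu e he
      rw [hA.prod_smul_right, hA.map_smul]
      exact Submodule.smul_mem _ c (hpu e he)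
  exact main _ (by rw [hspan]; exact Submodule.mem_top) A.eps
    (by rw [hspan]; exact Submodule.mem_top)
end
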